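/- Define W₂(N,k) = ∑ θ^{inv(π)} over all k-winnable π ∈ S_N, i.e., those π for which the strategy 'reject the first k candidates and accept the next left-to-right second maximum' selects the position holding value N−1. Then W₂ satisfies W₂(N,k) = θ²·P_{N-2}·W₂(N-1,k) + θ·T₂(N-1,k), with initial condition W₂(k+1,k) = θ·(P_k)!. -/

import Mathlib

open Finset
open scoped Classical

/-- Number of inversions of a permutation of `Fin N`. -/
def invCount {N : ℕ} (π : Equiv.Perm (Fin N)) : ℕ :=
  (Finset.univ.filter (fun p : Fin N × Fin N => p.1 < p.2 ∧ π p.2 < π p.1)).card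

/-- `P_j(θ) = 1 + θ + ⋯ + θ^{j-1}`. -/
def Ppoly (θ : ℝ) (j : ℕ) : ℝ := ∑ i ∈ Finset.range j, θ ^ i

/-- `(P_m)! = P_m ⋯ P_1`. -/
def Pfact (θ : ℝ) (m : ℕ) : ℝ := ∏ j ∈ Finset.Icc 1 m, Ppoly θ j

/-- Position `i` of `π` is a left-to-right second maximum. -/
def isSecondMax {N : ℕ} (π : Equiv.Perm (Fin N)) (i : Fin N) : Prop :=
  (Finset.univ.filter (fun l : Fin N => l ≤ i ∧ π i < π l)).card = 1

/-- `π` is non-`k`-pickable for the second-maximum strategy. -/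
def nonPickable2 {N : ℕ} (k : ℕ) (π : Equiv.Perm (Fin N)) : Prop :=
  ∀ i : Fin N, k ≤ (i : ℕ) → ¬ isSecondMax π i

/-- `π ∈ S_N` is `k`-winnable: the first left-to-right second maximum at a (0-based)
position `≥ k` carries the second-largest value `N-1` (0-based value `N-2`). -/
def kWinnable2 {N : ℕ} (k : ℕ) (π : Equiv.Perm (Fin N)) : Prop :=
  ∃ i : Fin N, k ≤ (i : ℕ) ∧ isSecondMax π i ∧
    (∀ j : Fin N, k ≤ (j : ℕ) → isSecondMax π j → i ≤ j) ∧ ((π i : Fin N) : ℕ) = N - 2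

/-- `T₂(N,k) = ∑ θ^{inv π}` over non-`k`-pickable `π ∈ S_N`. -/
noncomputable def T2 (θ : ℝ) (N k : ℕ) : ℝ :=
  ∑ π ∈ Finset.univ.filter (fun π : Equiv.Perm (Fin N) => nonPickable2 k π), θ ^ invCount π

/-- `W₂(N,k) = ∑ θ^{inv π}` over `k`-winnable `π ∈ S_N`. -/
noncomputable def W2 (θ : ℝ) (N k : ℕ) : ℝ :=
  ∑ π ∈ Finset.univ.filter (fun π : Equiv.Perm (Fin N) => kWinnable2 k π), θ ^ invCount π


namespace W2Aux


variable {n : ℕ}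

/-- Extend `σ : Perm (Fin n)` to `Perm (Fin (n+1))` fixing `last`. -/
def extLast (σ : Equiv.Perm (Fin n)) : Equiv.Perm (Fin (n + 1)) where
  toFun := Fin.lastCases (Fin.last n) (fun i => (σ i).castSucc)
  invFun := Fin.lastCases (Fin.last n) (fun i => (σ.symm i).castSucc)
  left_inv := by
    intro x
    cases x using Fin.lastCases with
    | last => simp
    | cast i => simp
  right_inv := by
    intro x
    cases x using Fin.lastCases with
    | last => simp
    | cast i => simp

/-- The cycle sending `last ↦ e` and `castSucc i ↦ e.succAbove i`. -/
def cyc (e : Fin (n + 1)) : Equiv.Perm (Fin (n + 1)) :=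
  finSuccEquivLast.trans (finSuccEquiv' e).symm

/-- The composite map: value `e` at last position, pattern `σ` before. -/
def Gmap (σ : Equiv.Perm (Fin n)) (e : Fin (n + 1)) : Equiv.Perm (Fin (n + 1)) :=
  (extLast σ).trans (cyc e)

@[simp] lemma Gmap_castSucc (σ : Equiv.Perm (Fin n)) (e : Fin (n + 1)) (i : Fin n) :
    Gmap σ e (Fin.castSucc i) = e.succAbove (σ i) := by
  simp [Gmap, cyc, extLast, Equiv.trans_apply, finSuccEquivLast_castSucc,
    finSuccEquiv'_symm_some]

@[simp] lemma Gmap_last (σ : Equiv.Perm (Fin n)) (e : Fin (n + 1)) :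
    Gmap σ e (Fin.last n) = e := by
  simp [Gmap, cyc, extLast, Equiv.trans_apply, finSuccEquivLast_last]

lemma Gmap_bijective : Function.Bijective
    (fun p : Equiv.Perm (Fin n) × Fin (n + 1) => Gmap p.1 p.2) := by
  rw [Fintype.bijective_iff_injective_and_card]
  constructor
  · rintro ⟨σ, e⟩ ⟨σ', e'⟩ h
    simp only at h
    have he : e = e' := by
      have := congrArg (fun π : Equiv.Perm (Fin (n+1)) => π (Fin.last n)) h
      simpa using this
    subst he
    have hσ : σ = σ' := by
      ext i
      have := congrArg (fun π : Equiv.Perm (Fin (n+1)) => π (Fin.castSucc i)) h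
      simp only [Gmap_castSucc] at this
      exact congrArg Fin.val (Fin.succAbove_right_injective this)
    simp [hσ]
  · simp [Fintype.card_perm, Fintype.card_prod, Nat.factorial_succ, mul_comm]

lemma sum_decomp (f : Equiv.Perm (Fin (n + 1)) → ℝ) :
    ∑ π : Equiv.Perm (Fin (n + 1)), f π
      = ∑ σ : Equiv.Perm (Fin n), ∑ e : Fin (n + 1), f (Gmap σ e) := by
  have := Fintype.sum_bijective _ (Gmap_bijective (n := n)) _ f (fun p => rfl)
  rw [← this, Fintype.sum_prod_type]


variable {n : ℕ}

lemma card_filter_comp_perm (σ : Equiv.Perm (Fin n)) (P : Fin n → Prop) [DecidablePred P] :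
    (univ.filter fun m => P (σ m)).card = (univ.filter P).card := by
  apply Finset.card_nbij (i := fun m => σ m)
  · intro m hm; simp only [mem_coe, mem_filter, mem_univ, true_and] at hm ⊢; exact hm
  · exact σ.injective.injOn
  · intro v hv
    simp only [coe_filter, Set.mem_setOf_eq, mem_univ, true_and] at hv
    exact ⟨σ.symm v, by simp [hv], by simp⟩

lemma card_val_ge (e : Fin (n + 1)) :
    (univ.filter fun v : Fin n => e ≤ (v : Fin n).castSucc).card = n - e.val := by
  have : (univ.filter fun v : Fin n => e ≤ v.castSucc).card = (Finset.Ico e.val n).card := by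
    apply Finset.card_nbij (i := Fin.val)
    · intro v hv
      simp only [mem_coe, mem_filter, mem_univ, true_and] at hv
      simp only [mem_coe, mem_Ico]
      exact ⟨by simpa [Fin.le_def] using hv, v.isLt⟩
    · exact Fin.val_injective.injOn
    · intro x hx
      simp only [coe_Ico, Set.mem_Ico] at hx
      exact ⟨⟨x, hx.2⟩, by simp [Fin.le_def, hx.1], rfl⟩
  rw [this, Nat.card_Ico]

lemma card_ge (σ : Equiv.Perm (Fin n)) (e : Fin (n + 1)) :
    (univ.filter fun m : Fin n => e ≤ (σ m).castSucc).card = n - e.val := by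
  exact (card_filter_comp_perm σ (fun v => e ≤ v.castSucc)).trans (card_val_ge e)


lemma invCount_Gmap (σ : Equiv.Perm (Fin n)) (e : Fin (n + 1)) :
    invCount (Gmap σ e) = invCount σ + (n - e.val) := by
  classical
  set π := Gmap σ e with hπ
  set S : Finset (Fin (n+1) × Fin (n+1)) :=
    univ.filter (fun p : Fin (n+1) × Fin (n+1) => p.1 < p.2 ∧ π p.2 < π p.1) with hS
  have hsplit := Finset.card_filter_add_card_filter_not
    (s := S) (p := fun p => p.2 = Fin.last n)
  have hA : (S.filter (fun p => p.2 = Fin.last n)).card = n - e.val := by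
    rw [← card_ge σ e]
    refine (Finset.card_nbij (i := fun m : Fin n => (Fin.castSucc m, Fin.last n)) ?_ ?_ ?_).symm
    · intro m hm
      simp only [mem_coe, mem_filter, mem_univ, true_and] at hm
      simp only [hS, mem_coe, mem_filter, mem_univ, true_and]
      refine ⟨⟨Fin.castSucc_lt_last m, ?_⟩, trivial⟩
      simp only [hπ, Gmap_last, Gmap_castSucc]
      exact (Fin.lt_succAbove_iff_le_castSucc e (σ m)).2 hm
    · intro a _ b _ h
      simpa using congrArg (fun p : Fin (n+1) × Fin (n+1) => p.1) h
    · intro p hp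
      simp only [coe_filter, Set.mem_setOf_eq, hS, mem_filter, mem_univ, true_and] at hp
      obtain ⟨⟨h12, hv⟩, h2⟩ := hp
      have h1lt : p.1 < Fin.last n := h2 ▸ h12
      refine ⟨p.1.castPred h1lt.ne, ?_, ?_⟩
      · simp only [coe_filter, Set.mem_setOf_eq, mem_univ, true_and]
        rw [h2] at hv
        simp only [hπ, Gmap_last] at hv
        have : π p.1 = e.succAbove (σ (p.1.castPred h1lt.ne)) := by
          conv_lhs => rw [← Fin.castSucc_castPred p.1 h1lt.ne]
          exact Gmap_castSucc σ e _
        rw [hπ] at this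
        rw [this] at hv
        exact (Fin.lt_succAbove_iff_le_castSucc e _).1 hv
      · ext
        · simp [Fin.castSucc_castPred]
        · simp [h2]
  have hB : (S.filter (fun p => ¬ p.2 = Fin.last n)).card = invCount σ := by
    rw [invCount]
    refine (Finset.card_nbij
      (i := fun q : Fin n × Fin n => (Fin.castSucc q.1, Fin.castSucc q.2)) ?_ ?_ ?_).symm
    · intro q hq
      simp only [mem_coe, mem_filter, mem_univ, true_and] at hq
      simp only [hS, mem_coe, mem_filter, mem_univ, true_and]
      refine ⟨⟨?_, ?_⟩, (Fin.castSucc_lt_last q.2).ne⟩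
      · exact Fin.castSucc_lt_castSucc_iff.2 hq.1
      · simp only [hπ, Gmap_castSucc]
        exact Fin.succAbove_lt_succAbove_iff.2 hq.2
    · intro a _ b _ h
      have h1 := congrArg (fun p : Fin (n+1) × Fin (n+1) => p.1) h
      have h2 := congrArg (fun p : Fin (n+1) × Fin (n+1) => p.2) h
      simp only at h1 h2
      ext
      · exact congrArg Fin.val (Fin.castSucc_injective n h1)
      · exact congrArg Fin.val (Fin.castSucc_injective n h2)
    · intro p hp
      simp only [coe_filter, Set.mem_setOf_eq, hS, mem_filter, mem_univ, true_and] at hp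
      obtain ⟨⟨h12, hv⟩, h2⟩ := hp
      have h2lt : p.2 < Fin.last n := lt_of_le_of_ne (Fin.le_last p.2) h2
      have h1lt : p.1 < Fin.last n := h12.trans h2lt
      refine ⟨(p.1.castPred h1lt.ne, p.2.castPred h2lt.ne), ?_, ?_⟩
      · simp only [coe_filter, Set.mem_setOf_eq, mem_univ, true_and]
        constructor
        · rw [← Fin.castSucc_lt_castSucc_iff, Fin.castSucc_castPred, Fin.castSucc_castPred]
          exact h12
        · rw [← Fin.succAbove_lt_succAbove_iff (p := e)]
          have e1 : π p.1 = e.succAbove (σ (p.1.castPred h1lt.ne)) := by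
            conv_lhs => rw [← Fin.castSucc_castPred p.1 h1lt.ne]
            exact Gmap_castSucc σ e _
          have e2 : π p.2 = e.succAbove (σ (p.2.castPred h2lt.ne)) := by
            conv_lhs => rw [← Fin.castSucc_castPred p.2 h2lt.ne]
            exact Gmap_castSucc σ e _
          rw [← e1, ← e2]
          exact hv
      · ext
        · simp [Fin.castSucc_castPred]
        · simp [Fin.castSucc_castPred]
  have : invCount π = S.card := by rw [invCount, hS]
  omega

lemma secondMax_castSucc_iff (σ : Equiv.Perm (Fin n)) (e : Fin (n + 1)) (i : Fin n) :
    isSecondMax (Gmap σ e) (Fin.castSucc i) ↔ isSecondMax σ i := by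
  unfold isSecondMax
  have hcard : (univ.filter (fun l : Fin (n+1) =>
        l ≤ Fin.castSucc i ∧ Gmap σ e (Fin.castSucc i) < Gmap σ e l)).card
      = (univ.filter (fun m : Fin n => m ≤ i ∧ σ i < σ m)).card := by
    refine (Finset.card_nbij (i := fun m : Fin n => Fin.castSucc m) ?_ ?_ ?_).symm
    · intro m hm
      simp only [mem_coe, mem_filter, mem_univ, true_and] at hm ⊢
      refine ⟨Fin.castSucc_le_castSucc_iff.2 hm.1, ?_⟩
      simp only [Gmap_castSucc]
      exact Fin.succAbove_lt_succAbove_iff.2 hm.2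
    · intro a _ b _ h
      exact Fin.castSucc_injective n h
    · intro l hl
      simp only [coe_filter, Set.mem_setOf_eq, mem_univ, true_and] at hl
      have hlt : l < Fin.last n := lt_of_le_of_lt hl.1 (Fin.castSucc_lt_last i)
      refine ⟨l.castPred hlt.ne, ?_, Fin.castSucc_castPred l hlt.ne⟩
      simp only [coe_filter, Set.mem_setOf_eq, mem_univ, true_and]
      constructor
      · rw [← Fin.castSucc_le_castSucc_iff, Fin.castSucc_castPred]
        exact hl.1
      · rw [← Fin.succAbove_lt_succAbove_iff (p := e)]
        have hG : Gmap σ e l = e.succAbove (σ (l.castPred hlt.ne)) := by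
          conv_lhs => rw [← Fin.castSucc_castPred l hlt.ne]
          exact Gmap_castSucc σ e _
        rw [← hG, ← Gmap_castSucc σ e i]
        exact hl.2
  rw [hcard]

lemma secondMax_last_iff (σ : Equiv.Perm (Fin n)) (e : Fin (n + 1)) :
    isSecondMax (Gmap σ e) (Fin.last n) ↔ n - e.val = 1 := by
  unfold isSecondMax
  have hcard : (univ.filter (fun l : Fin (n+1) =>
        l ≤ Fin.last n ∧ Gmap σ e (Fin.last n) < Gmap σ e l)).card = n - e.val := by
    rw [← card_ge σ e]
    refine (Finset.card_nbij (i := fun m : Fin n => Fin.castSucc m) ?_ ?_ ?_).symm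
    · intro m hm
      simp only [mem_coe, mem_filter, mem_univ, true_and] at hm ⊢
      refine ⟨Fin.le_last _, ?_⟩
      simp only [Gmap_castSucc, Gmap_last]
      exact (Fin.lt_succAbove_iff_le_castSucc e (σ m)).2 hm
    · intro a _ b _ h
      exact Fin.castSucc_injective n h
    · intro l hl
      simp only [coe_filter, Set.mem_setOf_eq, mem_univ, true_and] at hl
      obtain ⟨-, hv⟩ := hl
      have hne : l ≠ Fin.last n := by
        intro h; rw [h] at hv; exact lt_irrefl _ hv
      refine ⟨l.castPred hne, ?_, Fin.castSucc_castPred l hne⟩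
      simp only [coe_filter, Set.mem_setOf_eq, mem_univ, true_and]
      have hG : Gmap σ e l = e.succAbove (σ (l.castPred hne)) := by
        conv_lhs => rw [← Fin.castSucc_castPred l hne]
        exact Gmap_castSucc σ e _
      rw [hG, Gmap_last] at hv
      exact (Fin.lt_succAbove_iff_le_castSucc e _).1 hv
  rw [hcard]

lemma succAbove_val (e : Fin (n + 1)) (v : Fin n) :
    ((e.succAbove v) : ℕ) = if (v : ℕ) < (e : ℕ) then (v : ℕ) else (v : ℕ) + 1 := by
  rcases lt_or_ge (Fin.castSucc v) e with h | h
  · rw [Fin.succAbove_of_castSucc_lt _ _ h, if_pos]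
    · simp
    · simpa [Fin.lt_def] using h
  · rw [Fin.succAbove_of_le_castSucc _ _ h, if_neg]
    · simp
    · simpa [Fin.le_def, not_lt] using h

lemma not_secondMax_of_max (σ : Equiv.Perm (Fin n)) (i : Fin n)
    (h : ((σ i : Fin n) : ℕ) = n - 1) : ¬ isSecondMax σ i := by
  unfold isSecondMax
  have hemp : (univ.filter (fun l : Fin n => l ≤ i ∧ σ i < σ l)) = ∅ := by
    apply Finset.filter_eq_empty_iff.2
    rintro l - ⟨-, hlt⟩
    have h1 : ((σ l : Fin n) : ℕ) < n := (σ l).isLt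
    have h2 : ((σ i : Fin n) : ℕ) < ((σ l : Fin n) : ℕ) := hlt
    omega
  rw [hemp]
  simp

lemma kWinnable_Gmap_small (σ : Equiv.Perm (Fin n)) (e : Fin (n + 1)) (k : ℕ)
    (he : (e : ℕ) + 1 < n) :
    kWinnable2 k (Gmap σ e) ↔ kWinnable2 k σ := by
  have hval : ∀ v : Fin n, ((e.succAbove v : Fin (n+1)) : ℕ) = n - 1 ↔ (v : ℕ) = n - 2 := by
    intro v
    rw [succAbove_val]
    have h1 := v.isLt
    have h2 := e.isLt
    split <;> omega
  have hN2 : (n + 1) - 2 = n - 1 := by omega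
  constructor
  · rintro ⟨i, hki, hsm, hmin, hv⟩
    rw [hN2] at hv
    have hne : i ≠ Fin.last n := by
      intro h
      rw [h, Gmap_last] at hv
      omega
    have hcast : Fin.castSucc (i.castPred hne) = i := Fin.castSucc_castPred i hne
    refine ⟨i.castPred hne, ?_, ?_, ?_, ?_⟩
    · rw [← hcast] at hki; simpa using hki
    · rw [← secondMax_castSucc_iff σ e, hcast]; exact hsm
    · intro m hm hsm'
      have h := hmin (Fin.castSucc m) (by simpa using hm)
        ((secondMax_castSucc_iff σ e m).2 hsm')
      rw [← hcast] at h
      exact Fin.castSucc_le_castSucc_iff.1 h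
    · have hG : Gmap σ e i = e.succAbove (σ (i.castPred hne)) := by
        conv_lhs => rw [← hcast]
        exact Gmap_castSucc σ e _
      rw [hG] at hv
      exact (hval _).1 hv
  · rintro ⟨i, hki, hsm, hmin, hv⟩
    refine ⟨Fin.castSucc i, by simpa using hki, (secondMax_castSucc_iff σ e i).2 hsm, ?_, ?_⟩
    · intro j hkj hsmj
      have hjne : j ≠ Fin.last n := by
        intro h
        rw [h, secondMax_last_iff] at hsmj
        omega
      have hcast : Fin.castSucc (j.castPred hjne) = j := Fin.castSucc_castPred j hjne
      have hsmj' : isSecondMax σ (j.castPred hjne) := by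
        rw [← secondMax_castSucc_iff σ e, hcast]; exact hsmj
      have h := hmin (j.castPred hjne) (by rw [← hcast] at hkj; simpa using hkj) hsmj'
      rw [← hcast]
      exact Fin.castSucc_le_castSucc_iff.2 h
    · rw [Gmap_castSucc, hN2]
      exact (hval (σ i)).2 hv

lemma kWinnable_Gmap_mid (σ : Equiv.Perm (Fin n)) (e : Fin (n + 1)) (k : ℕ)
    (hn : 1 ≤ n) (hkn : k ≤ n) (he : (e : ℕ) = n - 1) :
    kWinnable2 k (Gmap σ e) ↔ nonPickable2 k σ := by
  have hval : ∀ v : Fin n, ((e.succAbove v : Fin (n+1)) : ℕ) ≠ n - 1 := by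
    intro v
    rw [succAbove_val]
    have h1 := v.isLt
    split <;> omega
  have hN2 : (n + 1) - 2 = n - 1 := by omega
  constructor
  · rintro ⟨i, hki, hsm, hmin, hv⟩
    rw [hN2] at hv
    have hi : i = Fin.last n := by
      by_contra h
      have hcast := Fin.castSucc_castPred i h
      have hG : Gmap σ e i = e.succAbove (σ (i.castPred h)) := by
        conv_lhs => rw [← hcast]
        exact Gmap_castSucc σ e _
      rw [hG] at hv
      exact hval _ hv
    subst hi
    intro m hm hsmm
    have h1 := hmin (Fin.castSucc m) (by simpa using hm)
      ((secondMax_castSucc_iff σ e m).2 hsmm)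
    exact absurd h1 (not_le.2 (Fin.castSucc_lt_last m))
  · intro hnp
    refine ⟨Fin.last n, by simpa using hkn, ?_, ?_, ?_⟩
    · rw [secondMax_last_iff]; omega
    · intro j hkj hsmj
      rcases eq_or_ne j (Fin.last n) with h | h
      · rw [h]
      · exfalso
        have hcast := Fin.castSucc_castPred j h
        have hsm' : isSecondMax σ (j.castPred h) := by
          rw [← secondMax_castSucc_iff σ e, hcast]; exact hsmj
        exact hnp _ (by rw [← hcast] at hkj; simpa using hkj) hsm'
    · rw [Gmap_last]; omega

lemma not_kWinnable_Gmap_top (σ : Equiv.Perm (Fin n)) (e : Fin (n + 1)) (k : ℕ)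
    (hn : 1 ≤ n) (he : (e : ℕ) = n) : ¬ kWinnable2 k (Gmap σ e) := by
  rintro ⟨i, hki, hsm, hmin, hv⟩
  have hN2 : (n + 1) - 2 = n - 1 := by omega
  rw [hN2] at hv
  rcases eq_or_ne i (Fin.last n) with h | h
  · rw [h, Gmap_last] at hv; omega
  · have hcast := Fin.castSucc_castPred i h
    have hG : Gmap σ e i = e.succAbove (σ (i.castPred h)) := by
      conv_lhs => rw [← hcast]
      exact Gmap_castSucc σ e _
    rw [hG, succAbove_val] at hv
    have hlt : ((σ (i.castPred h) : Fin n) : ℕ) < n := (σ _).isLt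
    rw [if_pos (by omega)] at hv
    have hsm' : isSecondMax σ (i.castPred h) := by
      rw [← secondMax_castSucc_iff σ e, hcast]; exact hsm
    exact not_secondMax_of_max σ _ hv hsm'

lemma sum_theta_inv (θ : ℝ) (m : ℕ) :
    ∑ σ : Equiv.Perm (Fin m), θ ^ invCount σ = Pfact θ m := by
  induction m with
  | zero =>
    rw [Pfact, show Finset.Icc 1 0 = (∅ : Finset ℕ) by rfl, Finset.prod_empty]
    rw [show (univ : Finset (Equiv.Perm (Fin 0))) = {1} from Finset.eq_singleton_iff_unique_mem.2
      ⟨mem_univ _, fun π _ => Subsingleton.elim π 1⟩]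
    simp [invCount]
  | succ m ih =>
    rw [sum_decomp (fun π => θ ^ invCount π)]
    have hstep : ∀ σ : Equiv.Perm (Fin m), ∑ e : Fin (m + 1), θ ^ invCount (Gmap σ e)
        = θ ^ invCount σ * Ppoly θ (m + 1) := by
      intro σ
      have h1 : ∀ e : Fin (m + 1), θ ^ invCount (Gmap σ e)
          = θ ^ invCount σ * θ ^ (m - (e : ℕ)) := by
        intro e
        rw [invCount_Gmap, pow_add]
      rw [Finset.sum_congr rfl (fun e _ => h1 e), ← Finset.mul_sum]
      congr 1
      rw [Fin.sum_univ_eq_sum_range (fun j => θ ^ (m - j)) (m + 1), Ppoly]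
      rw [← Finset.sum_range_reflect (fun j => θ ^ j) (m + 1)]
      apply Finset.sum_congr rfl
      intro j hj
      rw [Finset.mem_range] at hj
      congr 1
    rw [Finset.sum_congr rfl (fun σ _ => hstep σ), ← Finset.sum_mul, ih, Pfact, Pfact,
      Finset.prod_Icc_succ_top (by omega : 1 ≤ m + 1)]

lemma W2_of_le (θ : ℝ) {m k : ℕ} (h : m ≤ k) : W2 θ m k = 0 := by
  rw [W2]
  rw [Finset.filter_eq_empty_iff.2 ?_, Finset.sum_empty]
  rintro π - ⟨i, hki, -⟩
  have := i.isLt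
  omega

lemma T2_diag (θ : ℝ) (k : ℕ) : T2 θ k k = Pfact θ k := by
  rw [T2]
  have huniv : univ.filter (fun π : Equiv.Perm (Fin k) => nonPickable2 k π) = univ := by
    apply Finset.filter_true_of_mem
    intro π _ i hi _
    have := i.isLt
    omega
  rw [huniv]
  exact sum_theta_inv θ k

lemma W2_succ (θ : ℝ) (n k : ℕ) (hn : 1 ≤ n) (hkn : k ≤ n) :
    W2 θ (n + 1) k = θ ^ 2 * Ppoly θ (n - 1) * W2 θ n k + θ * T2 θ n k := by
  rw [W2, Finset.sum_filter,
    sum_decomp (fun π => if kWinnable2 k π then θ ^ invCount π else 0), Finset.sum_comm]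
  have hterm : ∀ e : Fin (n + 1), (∑ σ : Equiv.Perm (Fin n),
      (if kWinnable2 k (Gmap σ e) then θ ^ invCount (Gmap σ e) else 0))
      = (if (e : ℕ) + 1 < n then θ ^ (n - (e : ℕ)) * W2 θ n k
         else if (e : ℕ) = n - 1 then θ * T2 θ n k else 0) := by
    intro e
    by_cases h1 : (e : ℕ) + 1 < n
    · rw [if_pos h1, W2, Finset.sum_filter, Finset.mul_sum]
      apply Finset.sum_congr rfl
      intro σ _
      by_cases hw : kWinnable2 k σ
      · rw [if_pos ((kWinnable_Gmap_small σ e k h1).2 hw), if_pos hw, invCount_Gmap, pow_add]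
        ring
      · rw [if_neg (fun hc => hw ((kWinnable_Gmap_small σ e k h1).1 hc)), if_neg hw, mul_zero]
    · rw [if_neg h1]
      by_cases h2 : (e : ℕ) = n - 1
      · rw [if_pos h2, T2, Finset.sum_filter, Finset.mul_sum]
        apply Finset.sum_congr rfl
        intro σ _
        by_cases hw : nonPickable2 k σ
        · rw [if_pos ((kWinnable_Gmap_mid σ e k hn hkn h2).2 hw), if_pos hw, invCount_Gmap,
            show n - (e : ℕ) = 1 by omega, pow_add]
          ring
        · rw [if_neg (fun hc => hw ((kWinnable_Gmap_mid σ e k hn hkn h2).1 hc)), if_neg hw,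
            mul_zero]
      · rw [if_neg h2]
        have h3 : (e : ℕ) = n := by
          have := e.isLt
          omega
        apply Finset.sum_eq_zero
        intro σ _
        rw [if_neg (not_kWinnable_Gmap_top σ e k hn h3)]
  rw [Finset.sum_congr rfl (fun e _ => hterm e)]
  rw [Fin.sum_univ_eq_sum_range (fun j => if j + 1 < n then θ ^ (n - j) * W2 θ n k
    else if j = n - 1 then θ * T2 θ n k else 0) (n + 1)]
  have hsplit : Finset.range (n + 1) = insert n (insert (n - 1) (Finset.range (n - 1))) := by
    ext x
    simp only [Finset.mem_range, Finset.mem_insert]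
    omega
  rw [hsplit, Finset.sum_insert (by simp only [Finset.mem_insert, Finset.mem_range]; omega),
    Finset.sum_insert (by simp only [Finset.mem_range]; omega)]
  rw [if_neg (by omega : ¬ n + 1 < n), if_neg (by omega : ¬ n = n - 1)]
  rw [if_neg (by omega : ¬ (n - 1) + 1 < n), if_pos rfl]
  have hsum3 : ∑ j ∈ Finset.range (n - 1),
      (if j + 1 < n then θ ^ (n - j) * W2 θ n k else if j = n - 1 then θ * T2 θ n k else 0)
      = θ ^ 2 * Ppoly θ (n - 1) * W2 θ n k := by
    have hc : ∀ j ∈ Finset.range (n - 1),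
        (if j + 1 < n then θ ^ (n - j) * W2 θ n k else if j = n - 1 then θ * T2 θ n k else 0)
        = θ ^ (n - j) * W2 θ n k := by
      intro j hj
      rw [Finset.mem_range] at hj
      rw [if_pos (by omega)]
    rw [Finset.sum_congr rfl hc, ← Finset.sum_mul]
    congr 1
    rw [Ppoly, Finset.mul_sum, ← Finset.sum_range_reflect (fun j => θ ^ 2 * θ ^ j) (n - 1)]
    apply Finset.sum_congr rfl
    intro j hj
    rw [Finset.mem_range] at hj
    rw [← pow_add]
    congr 1
    omega
  rw [hsum3]
  ring

end W2Aux

/-- `W₂(N,k) = θ²·P_{N-2}·W₂(N-1,k) + θ·T₂(N-1,k)` for `N ≥ k+2`, with the initial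
condition `W₂(k+1,k) = θ·(P_k)!` (for `k ≥ 1`). -/
theorem W2_recurrence (θ : ℝ) (N k : ℕ) (hk : 1 ≤ k) (hN : k + 2 ≤ N) :
    W2 θ (k + 1) k = θ * Pfact θ k ∧
    W2 θ N k = θ ^ 2 * Ppoly θ (N - 2) * W2 θ (N - 1) k + θ * T2 θ (N - 1) k := by
  constructor
  · rw [W2Aux.W2_succ θ k k hk le_rfl, W2Aux.W2_of_le θ le_rfl, W2Aux.T2_diag]
    ring
  · obtain ⟨n, rfl⟩ : ∃ n, N = n + 1 := ⟨N - 1, by omega⟩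
    rw [show n + 1 - 2 = n - 1 by omega, show n + 1 - 1 = n by omega]
    exact W2Aux.W2_succ θ n k (by omega) (by omega)
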